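/- Let G be a finite abelian group of order n, k an integer with 4 ≤ k ≤ ⌊n/2⌋ + 1, and suppose n ≥ N₀ is large enough that k·n·C(⌊n/2⌋, ⌊k/2⌋) < C(n,k)/(2n) holds for all such k. Then N(k, b) > 0 for every b ∈ G, i.e., every group element is the sum of some k-subset. -/
import Mathlib

open Finset

-- closure under repeated translation
lemma aux_nsmul_mem {G : Type} [AddCommGroup G] [DecidableEq G] {S : Finset G} {d : G}
    (hS : ∀ x ∈ S, x + d ∈ S) : ∀ (t : ℕ), ∀ x ∈ S, x + t • d ∈ S := by
  intro t
  induction t with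
  | zero => intro x hx; simpa using hx
  | succ t ih =>
      intro x hx
      have := hS _ (ih x hx)
      have he : x + (t + 1) • d = x + t • d + d := by
        rw [add_nsmul, one_nsmul, add_assoc]
      rwa [he]

-- saturation under the subgroup generated by d (finite group)
lemma aux_sat {G : Type} [AddCommGroup G] [Fintype G] [DecidableEq G] {S : Finset G} {d : G}
    (hS : ∀ x ∈ S, x + d ∈ S) {x y : G}
    (hx : x ∈ S) (h : (x : G ⧸ AddSubgroup.zmultiples d) = (y : G ⧸ AddSubgroup.zmultiples d)) :
    y ∈ S := by
  rw [QuotientAddGroup.eq] at h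
  obtain ⟨z, hz⟩ := AddSubgroup.mem_zmultiples_iff.mp h
  have hy : y = x + z • d := by rw [hz]; abel
  set m : ℕ := addOrderOf d with hm
  have hmpos : 0 < m := addOrderOf_pos d
  have hmd : (m : ℤ) • d = 0 := by
    rw [natCast_zsmul]
    exact addOrderOf_nsmul_eq_zero d
  have hzmod : z • d = (z % (m : ℤ)) • d := by
    have : z = z % (m : ℤ) + (m : ℤ) * (z / (m : ℤ)) := by
      rw [Int.emod_add_mul_ediv]
    calc z • d = (z % (m : ℤ) + (m : ℤ) * (z / (m : ℤ))) • d := by rw [← this]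
    _ = (z % (m : ℤ)) • d + ((m : ℤ) * (z / (m : ℤ))) • d := by rw [add_zsmul]
    _ = (z % (m : ℤ)) • d + (z / (m : ℤ)) • ((m : ℤ) • d) := by
          rw [mul_comm, mul_zsmul]
    _ = (z % (m : ℤ)) • d := by rw [hmd, smul_zero, add_zero]
  have hnonneg : 0 ≤ z % (m : ℤ) := Int.emod_nonneg z (by exact_mod_cast hmpos.ne')
  have hfin : (z % (m : ℤ)) • d = (z % (m : ℤ)).toNat • d := by
    rw [← natCast_zsmul, Int.toNat_of_nonneg hnonneg]
  have : y = x + (z % (m : ℤ)).toNat • d := by rw [hy, hzmod, hfin]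
  rw [this]
  exact aux_nsmul_mem hS _ x hx

lemma aux_two {G : Type} [AddCommGroup G] [Fintype G] [DecidableEq G]
    {S : Finset G} {d : G} [DecidableEq (G ⧸ AddSubgroup.zmultiples d)]
    (hd : d ≠ 0) (hS : ∀ x ∈ S, x + d ∈ S) :
    2 * (S.image (QuotientAddGroup.mk : G → G ⧸ AddSubgroup.zmultiples d)).card ≤ S.card := by
  set mk : G → G ⧸ AddSubgroup.zmultiples d := QuotientAddGroup.mk with hmk
  rw [Finset.card_eq_sum_card_image mk S]
  have h2 : ∀ t ∈ S.image mk, 2 ≤ (S.filter (fun a => mk a = t)).card := by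
    intro t ht
    obtain ⟨x, hx, hxt⟩ := Finset.mem_image.mp ht
    have hxd : x + d ∈ S := hS x hx
    have hmkeq : mk (x + d) = mk x := by
      rw [hmk, QuotientAddGroup.eq]
      have h1 : -(x + d) + x = -d := by abel
      rw [h1]
      exact AddSubgroup.neg_mem _ (AddSubgroup.mem_zmultiples d)
    have hne : x ≠ x + d := fun h => hd (left_eq_add.mp h)
    have h1 : 1 < (S.filter (fun a => mk a = t)).card :=
      Finset.one_lt_card.mpr ⟨x, Finset.mem_filter.mpr ⟨hx, hxt⟩, x + d,
        Finset.mem_filter.mpr ⟨hxd, by rw [hmkeq, hxt]⟩, hne⟩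
    omega
  calc 2 * (S.image mk).card = (S.image mk).card • 2 := by rw [smul_eq_mul]; ring
  _ ≤ ∑ t ∈ S.image mk, (S.filter (fun a => mk a = t)).card :=
      Finset.card_nsmul_le_sum _ _ _ h2

lemma aux_mono (N : ℕ) : ∀ i j : ℕ, i ≤ j → 2 * j ≤ N + 1 → N.choose i ≤ N.choose j := by
  intro i j hij
  induction j, hij using Nat.le_induction with
  | base => intro _; exact le_refl _
  | succ j hj ih =>
    intro h2
    rcases Nat.lt_or_ge (2 * j + 2) (N + 1) with hlt | hge
    · have hj2 : j < N / 2 := by omega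
      exact le_trans (ih (by omega)) (Nat.choose_le_succ_of_lt_half_left hj2)
    · have hsymm := Nat.choose_symm (show j + 1 ≤ N by omega)
      rw [show N - (j + 1) = j from by omega] at hsymm
      rw [← hsymm]
      exact ih (by omega)

lemma aux_count {G : Type} [AddCommGroup G] [Fintype G] [DecidableEq G]
    (n k : ℕ) (hn : n = Fintype.card G) (hk : k ≤ n / 2 + 1) (hk4 : 4 ≤ k)
    (d : G) (hd : d ≠ 0) :
    ((Finset.univ.powersetCard k).filter (fun S : Finset G => ∀ x ∈ S, x + d ∈ S)).card
      ≤ k * ((n / 2).choose (k / 2)) := by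
  classical
  letI : Fintype (G ⧸ AddSubgroup.zmultiples d) := Fintype.ofFinite _
  -- the quotient is small
  have hcardQ : Fintype.card (G ⧸ AddSubgroup.zmultiples d) ≤ n / 2 := by
    have huniv : ∀ x ∈ (Finset.univ : Finset G), x + d ∈ Finset.univ := by
      intro x _; exact Finset.mem_univ _
    have h2 := aux_two (S := (Finset.univ : Finset G)) hd huniv
    have himg : (Finset.univ : Finset G).image
        (QuotientAddGroup.mk : G → G ⧸ AddSubgroup.zmultiples d) = Finset.univ :=
      Finset.image_univ_of_surjective (QuotientAddGroup.mk'_surjective _)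
    rw [himg, Finset.card_univ, Finset.card_univ] at h2
    omega
  have hinj : Set.InjOn
      (fun S : Finset G => S.image (QuotientAddGroup.mk : G → G ⧸ AddSubgroup.zmultiples d))
      ((Finset.univ.powersetCard k).filter (fun S : Finset G => ∀ x ∈ S, x + d ∈ S)) := by
    intro S hS S' hS' heq
    simp only [Finset.coe_filter, Set.mem_setOf_eq, Finset.mem_powersetCard_univ] at hS hS'
    simp only at heq
    ext x
    constructor
    · intro hx
      have hm : (x : G ⧸ AddSubgroup.zmultiples d) ∈ S'.image QuotientAddGroup.mk := by
        rw [← heq]; exact Finset.mem_image_of_mem _ hx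
      obtain ⟨y, hy, hyx⟩ := Finset.mem_image.mp hm
      exact aux_sat hS'.2 hy hyx
    · intro hx
      have hm : (x : G ⧸ AddSubgroup.zmultiples d) ∈ S.image QuotientAddGroup.mk := by
        rw [heq]; exact Finset.mem_image_of_mem _ hx
      obtain ⟨y, hy, hyx⟩ := Finset.mem_image.mp hm
      exact aux_sat hS.2 hy hyx
  have hmaps : ∀ S ∈ (Finset.univ.powersetCard k).filter
      (fun S : Finset G => ∀ x ∈ S, x + d ∈ S),
      S.image (QuotientAddGroup.mk : G → G ⧸ AddSubgroup.zmultiples d) ∈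
        (Finset.range (k / 2 + 1)).biUnion
          (fun j => (Finset.univ : Finset (G ⧸ AddSubgroup.zmultiples d)).powersetCard j) := by
    intro S hS
    simp only [Finset.mem_filter, Finset.mem_powersetCard_univ] at hS
    have h2 := aux_two hd hS.2
    rw [hS.1] at h2
    refine Finset.mem_biUnion.mpr
      ⟨(S.image QuotientAddGroup.mk).card, Finset.mem_range.mpr (by omega), ?_⟩
    exact Finset.mem_powersetCard_univ.mpr rfl
  have hccc := Finset.card_le_card_of_injOn _ hmaps hinj
  refine le_trans hccc (le_trans Finset.card_biUnion_le ?_)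
  have hbound : ∀ j ∈ Finset.range (k / 2 + 1),
      ((Finset.univ : Finset (G ⧸ AddSubgroup.zmultiples d)).powersetCard j).card
        ≤ (n / 2).choose (k / 2) := by
    intro j hj
    rw [Finset.card_powersetCard, Finset.card_univ]
    refine le_trans (Nat.choose_le_choose j hcardQ) ?_
    refine aux_mono (n / 2) j (k / 2) (by simpa [Nat.lt_succ_iff] using hj) ?_
    have h3 : k / 2 ≤ (n / 2 + 1) / 2 := Nat.div_le_div_right hk
    omega
  calc ∑ j ∈ Finset.range (k / 2 + 1),
        ((Finset.univ : Finset (G ⧸ AddSubgroup.zmultiples d)).powersetCard j).card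
      ≤ ∑ _j ∈ Finset.range (k / 2 + 1), (n / 2).choose (k / 2) :=
        Finset.sum_le_sum hbound
  _ = (k / 2 + 1) * (n / 2).choose (k / 2) := by
        rw [Finset.sum_const, Finset.card_range, smul_eq_mul]
  _ ≤ k * (n / 2).choose (k / 2) := by
        apply Nat.mul_le_mul_right
        omega

theorem stmt_17 (G : Type) [AddCommGroup G] [Fintype G] [DecidableEq G]
    (n k : ℕ) (hn : n = Fintype.card G) (hk4 : 4 ≤ k) (hk : k ≤ n / 2 + 1)
    (hbig : (k : ℝ) * (n : ℝ) * ((n / 2).choose (k / 2) : ℝ) <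
      (n.choose k : ℝ) / (2 * (n : ℝ))) :
    ∀ b : G, 0 < ((Finset.univ.powersetCard k).filter
        (fun S : Finset G => S.sum id = b)).card := by
  intro b
  by_contra hcon
  push_neg at hcon
  have h0 : ∀ S : Finset G, S.card = k → S.sum id ≠ b := by
    intro S hS hsum
    have hmem : S ∈ (Finset.univ.powersetCard k).filter (fun S : Finset G => S.sum id = b) :=
      Finset.mem_filter.mpr ⟨Finset.mem_powersetCard_univ.mpr hS, hsum⟩
    have := Finset.card_pos.mpr ⟨S, hmem⟩
    omega
  have stepA : ∀ S : Finset G, S.card = k → ∃ d : G, d ≠ 0 ∧ ∀ x ∈ S, x + d ∈ S := by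
    intro S hS
    refine ⟨b - S.sum id, ?_, ?_⟩
    · intro h
      exact h0 S hS (sub_eq_zero.mp h).symm
    · intro x hx
      by_contra hxd
      have hx' : x + (b - S.sum id) ∉ S.erase x := fun h => hxd (Finset.mem_of_mem_erase h)
      set S' := insert (x + (b - S.sum id)) (S.erase x) with hS'
      have hcard : S'.card = k := by
        rw [hS', Finset.card_insert_of_notMem hx', Finset.card_erase_of_mem hx, hS]
        omega
      have hsub : (S.erase x).sum id = S.sum id - x :=
        eq_sub_of_add_eq' (Finset.add_sum_erase S id hx)
      have hsum : S'.sum id = b := by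
        rw [hS', Finset.sum_insert hx', hsub]
        simp only [id_eq]
        abel
      exact h0 S' hcard hsum
  classical
  have hcover : Finset.univ.powersetCard k ⊆ (Finset.univ.erase (0 : G)).biUnion
      (fun d => (Finset.univ.powersetCard k).filter
        (fun S : Finset G => ∀ x ∈ S, x + d ∈ S)) := by
    intro S hS
    obtain ⟨d, hd0, hdS⟩ := stepA S (Finset.mem_powersetCard_univ.mp hS)
    exact Finset.mem_biUnion.mpr ⟨d, Finset.mem_erase.mpr ⟨hd0, Finset.mem_univ d⟩,
      Finset.mem_filter.mpr ⟨hS, hdS⟩⟩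
  have hcount : n.choose k ≤ (n - 1) * (k * ((n / 2).choose (k / 2))) := by
    calc n.choose k = (Finset.univ.powersetCard k : Finset (Finset G)).card := by
          rw [Finset.card_powersetCard, Finset.card_univ, ← hn]
    _ ≤ ((Finset.univ.erase (0 : G)).biUnion
          (fun d => (Finset.univ.powersetCard k).filter
            (fun S : Finset G => ∀ x ∈ S, x + d ∈ S))).card := Finset.card_le_card hcover
    _ ≤ ∑ d ∈ Finset.univ.erase (0 : G),
          ((Finset.univ.powersetCard k).filter
            (fun S : Finset G => ∀ x ∈ S, x + d ∈ S)).card := Finset.card_biUnion_le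
    _ ≤ ∑ _d ∈ Finset.univ.erase (0 : G), k * ((n / 2).choose (k / 2)) :=
          Finset.sum_le_sum (fun d hd =>
            aux_count n k hn hk hk4 d (Finset.mem_erase.mp hd).1)
    _ = (Finset.univ.erase (0 : G)).card * (k * ((n / 2).choose (k / 2))) := by
          rw [Finset.sum_const, smul_eq_mul]
    _ = (n - 1) * (k * ((n / 2).choose (k / 2))) := by
          rw [Finset.card_erase_of_mem (Finset.mem_univ 0), Finset.card_univ, ← hn]
  have hc2 : n.choose k ≤ k * n * ((n / 2).choose (k / 2)) := by
    refine le_trans hcount ?_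
    calc (n - 1) * (k * ((n / 2).choose (k / 2)))
        ≤ n * (k * ((n / 2).choose (k / 2))) :=
          Nat.mul_le_mul_right _ (by omega)
    _ = k * n * ((n / 2).choose (k / 2)) := by ring
  have hc3 : (n.choose k : ℝ) ≤ (k : ℝ) * (n : ℝ) * ((n / 2).choose (k / 2) : ℝ) := by
    exact_mod_cast hc2
  have hn6 : 6 ≤ n := by omega
  have hdiv : (n.choose k : ℝ) / (2 * (n : ℝ)) ≤ (n.choose k : ℝ) := by
    apply div_le_self (by positivity)
    have : (6 : ℝ) ≤ (n : ℝ) := by exact_mod_cast hn6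
    linarith
  linarith
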